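/- Let X̃, Ỹ ∈ ℝ^{M×N} with K_X = X̃ X̃ᵀ ≠ Ỹ Ỹᵀ = K_Y, and set α = Tr K_X, β = Tr K_Y, D = ‖K_X − K_Y‖_F², and R_Δ = R(K_X − K_Y) = ‖K_X − K_Y‖_*²/‖K_X − K_Y‖_F². Let P(X̃, Ỹ) = min over orthogonal N×N matrices R of ‖X̃ − Ỹ R‖_F be the Procrustes distance. Then (α + β) − √((α + β)² − R_Δ D) ≤ P(X̃, Ỹ)² ≤ √(R_Δ D); equivalently, (1/R_Δ) P(X̃, Ỹ)⁴ ≤ D ≤ (2(α + β) P(X̃, Ỹ)² − P(X̃, Ỹ)⁴)/R_Δ. -/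

import Mathlib

open Matrix

/-- The nuclear norm (sum of singular values) of a real matrix, where the singular values are
the square roots of the eigenvalues of `Aᵀ A`. -/
noncomputable def nuclearNorm {m n : Type*} [Fintype m] [Fintype n] [DecidableEq n]
    (A : Matrix m n ℝ) : ℝ :=
  ∑ i, Real.sqrt ((Matrix.isHermitian_conjTranspose_mul_self A).eigenvalues i)

/-- The squared Frobenius norm of a real matrix. -/
def frobSq {m n : Type*} [Fintype m] [Fintype n] (A : Matrix m n ℝ) : ℝ :=
  ∑ i, ∑ j, A i j ^ 2

noncomputable def Matrix.PosSemidef.sqrt {n : Type*} [Fintype n] [DecidableEq n] {H : Matrix n n ℝ}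
    (hH : H.PosSemidef) : Matrix n n ℝ :=
  (hH.1.eigenvectorUnitary : Matrix n n ℝ) * diagonal (Real.sqrt ∘ hH.1.eigenvalues) *
    star (hH.1.eigenvectorUnitary : Matrix n n ℝ)

open scoped MatrixOrder in
lemma Matrix.PosSemidef.sqrt_eq_cfcSqrt {n : Type*} [Fintype n] [DecidableEq n] {H : Matrix n n ℝ}
    (hH : H.PosSemidef) : hH.sqrt = CFC.sqrt H := by
  rw [CFC.sqrt_eq_cfc, cfc_nnreal_eq_real _ H, hH.1.cfc_eq, Matrix.IsHermitian.cfc,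
    Matrix.PosSemidef.sqrt]
  simp only [Unitary.conjStarAlgAut_apply]
  congr 3
  funext i
  simp [hH.eigenvalues_nonneg i]

open scoped MatrixOrder in
lemma Matrix.PosSemidef.posSemidef_sqrt {n : Type*} [Fintype n] [DecidableEq n] {H : Matrix n n ℝ}
    (hH : H.PosSemidef) : hH.sqrt.PosSemidef := by
  rw [hH.sqrt_eq_cfcSqrt]; exact (CFC.sqrt_nonneg H).posSemidef

open scoped MatrixOrder in
lemma Matrix.PosSemidef.sqrt_mul_self {n : Type*} [Fintype n] [DecidableEq n] {H : Matrix n n ℝ}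
    (hH : H.PosSemidef) : hH.sqrt * hH.sqrt = H := by
  rw [hH.sqrt_eq_cfcSqrt]; exact CFC.sqrt_mul_sqrt_self H hH.nonneg

lemma Matrix.PosSemidef.sq_sqrt {n : Type*} [Fintype n] [DecidableEq n] {H : Matrix n n ℝ}
    (hH : H.PosSemidef) : hH.sqrt ^ 2 = H := by
  rw [sq, hH.sqrt_mul_self]

open scoped MatrixOrder in
lemma Matrix.PosSemidef.eq_sqrt_of_sq_eq {n : Type*} [Fintype n] [DecidableEq n] {A : Matrix n n ℝ}
    (hA : A.PosSemidef) (B : Matrix n n ℝ) {hB : B.PosSemidef} (hAB : A ^ 2 = B) : A = hB.sqrt := by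
  rw [hB.sqrt_eq_cfcSqrt, eq_comm, CFC.sqrt_eq_iff B A hB.nonneg hA.nonneg, ← sq, hAB]

set_option linter.unusedSectionVars false
set_option maxHeartbeats 1000000 in
section

namespace ProcrustesAux


variable {m n : Type*} [Fintype m] [Fintype n] [DecidableEq m] [DecidableEq n]

lemma frobSq_nonneg (A : Matrix m n ℝ) : 0 ≤ frobSq A :=
  Finset.sum_nonneg fun _ _ => Finset.sum_nonneg fun _ _ => sq_nonneg _

lemma frobSq_pos {A : Matrix m n ℝ} (hA : A ≠ 0) : 0 < frobSq A := by
  rcases lt_or_eq_of_le (frobSq_nonneg A) with h | h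
  · exact h
  · exfalso; apply hA
    ext i j
    have h0 : ∀ i ∈ (Finset.univ : Finset m), 0 ≤ ∑ j, A i j ^ 2 :=
      fun _ _ => Finset.sum_nonneg fun _ _ => sq_nonneg _
    have h1 := (Finset.sum_eq_zero_iff_of_nonneg h0).mp h.symm i (Finset.mem_univ i)
    have h2 := (Finset.sum_eq_zero_iff_of_nonneg (fun k (_ : k ∈ (Finset.univ : Finset n)) => sq_nonneg (A i k))).mp h1 j
      (Finset.mem_univ j)
    simpa using pow_eq_zero_iff (n := 2) (by norm_num) |>.mp h2

lemma trace_mul_transpose (A B : Matrix m n ℝ) :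
    (A * Bᵀ).trace = ∑ i, ∑ j, A i j * B i j := by
  simp [Matrix.trace, Matrix.diag, Matrix.mul_apply]

lemma frobSq_eq_trace_mul_transpose (A : Matrix m n ℝ) : frobSq A = (A * Aᵀ).trace := by
  rw [trace_mul_transpose]
  simp [frobSq, sq]

lemma frobSq_eq_trace_transpose_mul (A : Matrix m n ℝ) : frobSq A = (Aᵀ * A).trace := by
  rw [frobSq_eq_trace_mul_transpose]
  exact Matrix.trace_mul_comm A Aᵀ

lemma frobSq_sub (A B : Matrix m n ℝ) :
    frobSq (A - B) = frobSq A + frobSq B - 2 * ∑ i, ∑ j, A i j * B i j := by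
  have h : ∀ i j, (A - B) i j ^ 2 = A i j ^ 2 + B i j ^ 2 - 2 * (A i j * B i j) := by
    intro i j; simp [Matrix.sub_apply]; ring
  simp only [frobSq, h, Finset.sum_sub_distrib, Finset.sum_add_distrib, ← Finset.mul_sum]

lemma frobSq_add_add_sub (A B : Matrix m n ℝ) :
    frobSq (A + B) + frobSq (A - B) = 2 * (frobSq A + frobSq B) := by
  have h : ∀ i j, (A + B) i j ^ 2 + (A - B) i j ^ 2 = 2 * (A i j ^ 2 + B i j ^ 2) := by
    intro i j; simp [Matrix.sub_apply, Matrix.add_apply]; ring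
  simp only [frobSq, ← Finset.sum_add_distrib, h, ← Finset.mul_sum]

/-- Spectral decomposition of a real symmetric matrix with an orthogonal matrix. -/
lemma exists_orth_diag {A : Matrix m m ℝ} (hA : A.IsHermitian) :
    ∃ V : Matrix m m ℝ, Vᵀ * V = 1 ∧ V * Vᵀ = 1 ∧
      A = V * diagonal hA.eigenvalues * Vᵀ := by
  refine ⟨(hA.eigenvectorUnitary : Matrix m m ℝ), ?_, ?_, ?_⟩
  · have := (Matrix.mem_unitaryGroup_iff').mp hA.eigenvectorUnitary.2
    simpa [Matrix.star_eq_conjTranspose, Matrix.conjTranspose_eq_transpose_of_trivial] using this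
  · have := (Matrix.mem_unitaryGroup_iff).mp hA.eigenvectorUnitary.2
    simpa [Matrix.star_eq_conjTranspose, Matrix.conjTranspose_eq_transpose_of_trivial] using this
  · have h := hA.spectral_theorem
    have h2 : (RCLike.ofReal ∘ hA.eigenvalues : m → ℝ) = hA.eigenvalues := by
      ext x; simp
    rw [h2] at h
    simpa [Matrix.star_eq_conjTranspose, Matrix.conjTranspose_eq_transpose_of_trivial] using h


variable {m n : Type*} [Fintype m] [Fintype n] [DecidableEq m] [DecidableEq n]

lemma posSemidef_transpose_mul_self (A : Matrix m n ℝ) : (Aᵀ * A).PosSemidef := by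
  rw [← Matrix.conjTranspose_eq_transpose_of_trivial]
  exact Matrix.posSemidef_conjTranspose_mul_self A

lemma posSemidef_self_mul_transpose (A : Matrix m n ℝ) : (A * Aᵀ).PosSemidef := by
  rw [← Matrix.conjTranspose_eq_transpose_of_trivial]
  exact Matrix.posSemidef_self_mul_conjTranspose A

lemma trace_psd_sqrt {H : Matrix m m ℝ} (hH : H.PosSemidef) :
    hH.sqrt.trace = ∑ i, Real.sqrt (hH.1.eigenvalues i) := by
  rw [Matrix.PosSemidef.sqrt, Matrix.trace_mul_cycle]
  rw [show (star (hH.1.eigenvectorUnitary : Matrix m m ℝ)) * (hH.1.eigenvectorUnitary : Matrix m m ℝ) = 1 from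
    (Matrix.mem_unitaryGroup_iff').mp hH.1.eigenvectorUnitary.2]
  simp [Matrix.trace_diagonal, Function.comp]

lemma nuclearNorm_eq_trace_sqrt (A : Matrix m n ℝ) (h : (Aᵀ * A).PosSemidef) :
    nuclearNorm A = h.sqrt.trace := by
  rw [trace_psd_sqrt]; rfl

lemma eigenvalues_congr {A B : Matrix m m ℝ} (hA : A.IsHermitian) (hB : B.IsHermitian)
    (h : A = B) : hA.eigenvalues = hB.eigenvalues := by subst h; rfl

lemma nuclearNorm_eq_of_gram_eq {m' : Type*} [Fintype m'] {A : Matrix m n ℝ}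
    {B : Matrix m' n ℝ} (h : Aᵀ * A = Bᵀ * B) : nuclearNorm A = nuclearNorm B := by
  unfold nuclearNorm
  rw [eigenvalues_congr (Matrix.isHermitian_conjTranspose_mul_self A)
    (Matrix.isHermitian_conjTranspose_mul_self B) h]

lemma transpose_eq_of_isHermitian {A : Matrix m m ℝ} (hA : A.IsHermitian) : Aᵀ = A := by
  rw [← Matrix.conjTranspose_eq_transpose_of_trivial]; exact hA

/-- For a real symmetric matrix, the nuclear norm is the sum of absolute values of eigenvalues,
witnessed by a symmetric orthogonal "sign" matrix `W` with `(W * A).trace = nuclearNorm A`. -/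
lemma sign_package {A : Matrix m m ℝ} (hA : A.IsHermitian) :
    nuclearNorm A = ∑ i, |hA.eigenvalues i| ∧
    ∃ W : Matrix m m ℝ, Wᵀ = W ∧ Wᵀ * W = 1 ∧ (W * A).trace = nuclearNorm A := by
  obtain ⟨V, hV1, hV2, hspec⟩ := exists_orth_diag hA
  set lam := hA.eigenvalues with hlam
  set s : m → ℝ := fun i => if lam i < 0 then (-1 : ℝ) else 1 with hs
  set W := V * diagonal s * Vᵀ with hW
  set absA := V * diagonal (fun i => |lam i|) * Vᵀ with habsA
  have hconj : ∀ f g : m → ℝ, (V * diagonal f * Vᵀ) * (V * diagonal g * Vᵀ)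
      = V * diagonal (fun i => f i * g i) * Vᵀ := by
    intro f g
    have h0 : V * diagonal f * Vᵀ * (V * diagonal g * Vᵀ)
        = V * (diagonal f * (Vᵀ * V) * diagonal g) * Vᵀ := by
      simp only [Matrix.mul_assoc]
    rw [h0, hV1, Matrix.mul_one, Matrix.diagonal_mul_diagonal]
  have htraceconj : ∀ f : m → ℝ, (V * diagonal f * Vᵀ).trace = ∑ i, f i := by
    intro f
    rw [Matrix.trace_mul_cycle, hV1, Matrix.one_mul, Matrix.trace_diagonal]
  have hsl : (fun i => s i * lam i) = fun i => |lam i| := by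
    funext i
    by_cases h : lam i < 0
    · simp [hs, h, abs_of_neg h]
    · simp [hs, h, abs_of_nonneg (not_lt.mp h)]
  have hls : (fun i => lam i * s i) = fun i => |lam i| := by
    funext i
    by_cases h : lam i < 0
    · simp [hs, h, abs_of_neg h]
    · simp [hs, h, abs_of_nonneg (not_lt.mp h)]
  have hll : (fun i => |lam i| * |lam i|) = fun i => lam i * lam i :=
    funext fun i => abs_mul_abs_self _
  have hWA : W * A = absA := by
    rw [hW, habsA, hspec, hconj, hsl]
  have hAW : A * W = absA := by
    rw [hW, habsA, hspec, hconj, hls]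
  have habs_psd : absA.PosSemidef := by
    have hd : (diagonal (fun i => |lam i|)).PosSemidef :=
      Matrix.posSemidef_diagonal_iff.mpr fun i => abs_nonneg _
    have := hd.mul_mul_conjTranspose_same V
    simpa [Matrix.conjTranspose_eq_transpose_of_trivial] using this
  have habs_sq : absA ^ 2 = Aᵀ * A := by
    rw [pow_two, habsA, hconj, transpose_eq_of_isHermitian hA, hspec, hconj, hll]
  have hsqrt : absA = (posSemidef_transpose_mul_self A).sqrt :=
    habs_psd.eq_sqrt_of_sq_eq _ habs_sq
  have htr_abs : absA.trace = ∑ i, |lam i| := htraceconj _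
  have hnn : nuclearNorm A = ∑ i, |lam i| := by
    rw [nuclearNorm_eq_trace_sqrt A (posSemidef_transpose_mul_self A), ← hsqrt, htr_abs]
  refine ⟨hnn, W, ?_, ?_, ?_⟩
  · rw [hW]
    simp only [Matrix.transpose_mul, Matrix.transpose_transpose, Matrix.diagonal_transpose]
    rw [Matrix.mul_assoc]
  · have hWt : Wᵀ = W := by
      rw [hW]
      simp only [Matrix.transpose_mul, Matrix.transpose_transpose, Matrix.diagonal_transpose]
      rw [Matrix.mul_assoc]
    rw [hWt, hW, hconj]
    have : (fun i => s i * s i) = fun _ => (1 : ℝ) := by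
      ext i; by_cases h : lam i < 0 <;> simp [hs, h]
    rw [this, Matrix.diagonal_one, Matrix.mul_one, hV2]
  · rw [hWA, htr_abs, hnn]

/-- Trace against an orthogonal matrix is bounded by the nuclear norm (symmetric case). -/
lemma trace_mul_orth_le {A W : Matrix m m ℝ} (hA : A.IsHermitian) (hW : Wᵀ * W = 1) :
    (A * W).trace ≤ nuclearNorm A := by
  obtain ⟨V, hV1, hV2, hspec⟩ := exists_orth_diag hA
  set lam := hA.eigenvalues
  set G := Vᵀ * W * V with hG
  have hGorth : Gᵀ * G = 1 := by
    have h0 : Gᵀ * G = Vᵀ * (Wᵀ * (V * Vᵀ * (W * V))) := by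
      rw [hG]; simp only [Matrix.transpose_mul, Matrix.transpose_transpose, Matrix.mul_assoc]
    rw [h0, hV2, Matrix.one_mul,
      show Wᵀ * (W * V) = Wᵀ * W * V by rw [Matrix.mul_assoc], hW, Matrix.one_mul, hV1]
  have hGcol : ∀ i, |G i i| ≤ 1 := by
    intro i
    have h1 : (Gᵀ * G) i i = ∑ k, G k i * G k i := by
      simp [Matrix.mul_apply, Matrix.transpose_apply]
    have h2 : (Gᵀ * G) i i = 1 := by rw [hGorth]; simp
    have h3 : G i i ^ 2 ≤ 1 := by
      rw [← h2, h1]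
      calc G i i ^ 2 = G i i * G i i := sq _
        _ ≤ ∑ k, G k i * G k i := Finset.single_le_sum
            (f := fun k => G k i * G k i) (fun k _ => mul_self_nonneg _) (Finset.mem_univ i)
    nlinarith [abs_nonneg (G i i), sq_abs (G i i)]
  have htr : (A * W).trace = ∑ i, lam i * G i i := by
    have h0 : (A * W).trace = (G * diagonal lam).trace := by
      rw [hspec, hG,
        show V * diagonal lam * Vᵀ * W = V * (diagonal lam * (Vᵀ * W)) by
          simp only [Matrix.mul_assoc],
        Matrix.trace_mul_comm,
        show diagonal lam * (Vᵀ * W) * V = diagonal lam * (Vᵀ * W * V) by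
          simp only [Matrix.mul_assoc],
        Matrix.trace_mul_comm]
    rw [h0]
    simp [Matrix.trace, Matrix.diag, Matrix.mul_apply, Matrix.diagonal_apply, mul_comm]
  rw [htr, (sign_package hA).1]
  apply Finset.sum_le_sum
  intro i _
  calc lam i * G i i ≤ |lam i * G i i| := le_abs_self _
    _ = |lam i| * |G i i| := abs_mul _ _
    _ ≤ |lam i| * 1 := by
        exact mul_le_mul_of_nonneg_left (hGcol i) (abs_nonneg _)
    _ = |lam i| := mul_one _


lemma gram_diag (A : Matrix m n ℝ) :
    ∃ V : Matrix n n ℝ, Vᵀ * V = 1 ∧ V * Vᵀ = 1 ∧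
      (A * V)ᵀ * (A * V) = diagonal ((Matrix.isHermitian_conjTranspose_mul_self A).eigenvalues) ∧
      ∀ i, 0 ≤ (Matrix.isHermitian_conjTranspose_mul_self A).eigenvalues i := by
  obtain ⟨V, hV1, hV2, hspec⟩ := exists_orth_diag (Matrix.isHermitian_conjTranspose_mul_self A)
  refine ⟨V, hV1, hV2, ?_, (posSemidef_transpose_mul_self A).eigenvalues_nonneg⟩
  have h0 : (A * V)ᵀ * (A * V) = Vᵀ * (Aᵀ * A) * V := by
    simp only [Matrix.transpose_mul, Matrix.mul_assoc]
  have hAA : Aᵀ * A = V * diagonal ((Matrix.isHermitian_conjTranspose_mul_self A).eigenvalues) * Vᵀ := by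
    rw [← Matrix.conjTranspose_eq_transpose_of_trivial]; exact hspec
  rw [h0]
  conv_lhs => rw [hAA]
  rw [show Vᵀ * (V * diagonal ((Matrix.isHermitian_conjTranspose_mul_self A).eigenvalues) * Vᵀ) * V
      = (Vᵀ * V) * diagonal ((Matrix.isHermitian_conjTranspose_mul_self A).eigenvalues) * (Vᵀ * V) by
    simp only [Matrix.mul_assoc], hV1, Matrix.one_mul, Matrix.mul_one]

lemma col_dot_of_gram {B : Matrix m n ℝ} {d : n → ℝ} (hBB : Bᵀ * B = diagonal d) (i j : n) :
    ∑ k, B k i * B k j = if i = j then d i else 0 := by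
  have h := congrFun (congrFun hBB i) j
  simpa [Matrix.mul_apply, Matrix.diagonal_apply] using h

lemma col_zero_of_gram {B : Matrix m n ℝ} {d : n → ℝ} (hBB : Bᵀ * B = diagonal d) {i : n}
    (hi : d i = 0) (k : m) : B k i = 0 := by
  have h := col_dot_of_gram hBB i i
  rw [if_pos rfl, hi] at h
  have h2 := (Finset.sum_eq_zero_iff_of_nonneg
    (fun l (_ : l ∈ (Finset.univ : Finset m)) => mul_self_nonneg (B l i))).mp h k
    (Finset.mem_univ k)
  exact mul_self_eq_zero.mp h2

lemma nuclearNorm_transpose (A : Matrix m n ℝ) : nuclearNorm Aᵀ = nuclearNorm A := by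
  obtain ⟨V, hV1, hV2, hBB, hd0⟩ := gram_diag A
  set d := (Matrix.isHermitian_conjTranspose_mul_self A).eigenvalues with hd
  set B := A * V with hB
  set c : n → ℝ := fun i => if d i = 0 then 0 else (Real.sqrt (d i))⁻¹ with hc
  have hc0 : ∀ i, 0 ≤ c i := by
    intro i; by_cases h : d i = 0 <;> simp [hc, h, Real.sqrt_nonneg, inv_nonneg]
  set F := B * diagonal c * Bᵀ with hF
  have hBchi : B * diagonal (fun i => if d i = 0 then (0 : ℝ) else 1) = B := by
    ext k i
    rw [Matrix.mul_diagonal]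
    by_cases h : d i = 0
    · simp [h, col_zero_of_gram hBB h k]
    · simp [h]
  have hFsq : F * F = A * Aᵀ := by
    have h1 : F * F = B * (diagonal c * (Bᵀ * B) * diagonal c) * Bᵀ := by
      rw [hF]; simp only [Matrix.mul_assoc]
    rw [h1, hBB, Matrix.diagonal_mul_diagonal, Matrix.diagonal_mul_diagonal]
    have h2 : (fun i => c i * d i * c i) = fun i => if d i = 0 then (0:ℝ) else 1 := by
      funext i
      by_cases h : d i = 0
      · simp [hc, h]
      · have hdpos : 0 < d i := lt_of_le_of_ne (hd0 i) (Ne.symm h)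
        have hs : Real.sqrt (d i) ≠ 0 := ne_of_gt (Real.sqrt_pos.mpr hdpos)
        have hss : Real.sqrt (d i) * Real.sqrt (d i) = d i := Real.mul_self_sqrt (hd0 i)
        simp only [hc, if_neg h]
        calc (Real.sqrt (d i))⁻¹ * d i * (Real.sqrt (d i))⁻¹
            = d i * ((Real.sqrt (d i))⁻¹ * (Real.sqrt (d i))⁻¹) := by ring
          _ = d i * (Real.sqrt (d i) * Real.sqrt (d i))⁻¹ := by rw [mul_inv]
          _ = d i * (d i)⁻¹ := by rw [hss]
          _ = 1 := mul_inv_cancel₀ h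
    rw [h2, show B * diagonal (fun i => if d i = 0 then (0:ℝ) else 1) * Bᵀ
        = (B * diagonal (fun i => if d i = 0 then (0:ℝ) else 1)) * Bᵀ from rfl, hBchi]
    rw [hB]
    rw [show A * V * (A * V)ᵀ = A * (V * Vᵀ) * Aᵀ by
      simp only [Matrix.transpose_mul, Matrix.mul_assoc], hV2, Matrix.mul_one]
  have hFpsd : F.PosSemidef := by
    have hL : F = (B * diagonal fun i => Real.sqrt (c i)) * (B * diagonal fun i => Real.sqrt (c i))ᵀ := by
      rw [Matrix.transpose_mul, Matrix.diagonal_transpose]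
      rw [show B * diagonal (fun i => Real.sqrt (c i)) * (diagonal (fun i => Real.sqrt (c i)) * Bᵀ)
          = B * (diagonal (fun i => Real.sqrt (c i)) * diagonal (fun i => Real.sqrt (c i))) * Bᵀ by
        simp only [Matrix.mul_assoc]]
      rw [Matrix.diagonal_mul_diagonal]
      rw [show (fun i => Real.sqrt (c i) * Real.sqrt (c i)) = c from
        funext fun i => Real.mul_self_sqrt (hc0 i)]
    rw [hL]
    exact posSemidef_self_mul_transpose _
  have hsqrt : F = (posSemidef_self_mul_transpose A).sqrt :=
    hFpsd.eq_sqrt_of_sq_eq _ (by rw [pow_two, hFsq])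
  have hps' : (Aᵀᵀ * Aᵀ).PosSemidef := by
    rw [Matrix.transpose_transpose]; exact posSemidef_self_mul_transpose A
  have hsqrt_congr : hps'.sqrt = (posSemidef_self_mul_transpose A).sqrt := by
    have h : Aᵀᵀ * Aᵀ = A * Aᵀ := by rw [Matrix.transpose_transpose]
    exact Matrix.PosSemidef.eq_sqrt_of_sq_eq hps'.posSemidef_sqrt _
      (by rw [hps'.sq_sqrt, h])
  have htrF : F.trace = ∑ i, Real.sqrt (d i) := by
    rw [hF, Matrix.trace_mul_cycle, hBB, Matrix.diagonal_mul_diagonal, Matrix.trace_diagonal]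
    congr 1; funext i
    by_cases h : d i = 0
    · simp [hc, h]
    · have hdpos : 0 < d i := lt_of_le_of_ne (hd0 i) (Ne.symm h)
      rw [hc]
      simp only [if_neg h]
      rw [← div_eq_mul_inv, Real.div_sqrt]
  rw [nuclearNorm_eq_trace_sqrt Aᵀ hps', hsqrt_congr, ← hsqrt, htrF]
  rfl

lemma trace_le_nuclearNorm (C : Matrix m m ℝ) : C.trace ≤ nuclearNorm C := by
  obtain ⟨V, hV1, hV2, hBB, hd0⟩ := gram_diag C
  set d := (Matrix.isHermitian_conjTranspose_mul_self C).eigenvalues with hd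
  set B := C * V with hB
  have htr : C.trace = ∑ i, ∑ k, V k i * B k i := by
    conv_lhs => rw [show C = C * (V * Vᵀ) by rw [hV2, Matrix.mul_one], ← Matrix.mul_assoc,
      Matrix.trace_mul_comm]
    rw [show Vᵀ * (C * V) = Vᵀ * B from rfl]
    simp [Matrix.trace, Matrix.diag, Matrix.mul_apply, Matrix.transpose_apply]
  have : ∀ i, ∑ k, V k i * B k i ≤ Real.sqrt (d i) := by
    intro i
    have hcs := Finset.sum_mul_sq_le_sq_mul_sq Finset.univ (fun k => V k i) (fun k => B k i)
    have hV : ∑ k, V k i ^ 2 = 1 := by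
      have h := congrFun (congrFun hV1 i) i
      simpa [Matrix.mul_apply, Matrix.transpose_apply, sq] using h
    have hBc : ∑ k, B k i ^ 2 = d i := by
      have := col_dot_of_gram hBB i i
      rw [if_pos rfl] at this
      simpa [sq] using this
    rw [hV, hBc, one_mul] at hcs
    calc ∑ k, V k i * B k i ≤ |∑ k, V k i * B k i| := le_abs_self _
      _ = Real.sqrt ((∑ k, V k i * B k i) ^ 2) := (Real.sqrt_sq_eq_abs _).symm
      _ ≤ Real.sqrt (d i) := Real.sqrt_le_sqrt hcs
  calc C.trace = ∑ i, ∑ k, V k i * B k i := htr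
    _ ≤ ∑ i, Real.sqrt (d i) := Finset.sum_le_sum fun i _ => this i
    _ = nuclearNorm C := rfl

lemma conj_mul {V : Matrix m m ℝ} (hV1 : Vᵀ * V = 1) (f g : m → ℝ) :
    (V * diagonal f * Vᵀ) * (V * diagonal g * Vᵀ) = V * diagonal (fun i => f i * g i) * Vᵀ := by
  have h0 : V * diagonal f * Vᵀ * (V * diagonal g * Vᵀ)
      = V * (diagonal f * (Vᵀ * V) * diagonal g) * Vᵀ := by
    simp only [Matrix.mul_assoc]
  rw [h0, hV1, Matrix.mul_one, Matrix.diagonal_mul_diagonal]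

lemma conj_trace {V : Matrix m m ℝ} (hV1 : Vᵀ * V = 1) (f : m → ℝ) :
    (V * diagonal f * Vᵀ).trace = ∑ i, f i := by
  rw [Matrix.trace_mul_cycle, hV1, Matrix.one_mul, Matrix.trace_diagonal]

lemma conj_transpose_self (V : Matrix m m ℝ) (f : m → ℝ) :
    (V * diagonal f * Vᵀ)ᵀ = V * diagonal f * Vᵀ := by
  simp only [Matrix.transpose_mul, Matrix.transpose_transpose, Matrix.diagonal_transpose]
  rw [Matrix.mul_assoc]

lemma psd_diag_nonneg {M : Matrix m m ℝ} (hM : M.PosSemidef) (i : m) : 0 ≤ M i i := by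
  exact hM.diag_nonneg

lemma powers_stormer {X Y : Matrix m m ℝ} (hX : X.PosSemidef) (hY : Y.PosSemidef) :
    frobSq (X - Y) ≤ nuclearNorm (X * X - Y * Y) := by
  set C := X - Y with hC
  set Dm := X + Y with hDm
  have hCher : C.IsHermitian := hX.1.sub hY.1
  obtain ⟨V, hV1, hV2, hspec⟩ := exists_orth_diag hCher
  set μ := hCher.eigenvalues with hμ
  set s : m → ℝ := fun i => if μ i < 0 then (-1 : ℝ) else 1 with hs
  have hsl : (fun i => s i * μ i) = fun i => |μ i| := by
    funext i
    by_cases h : μ i < 0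
    · simp [hs, h, abs_of_neg h]
    · simp [hs, h, abs_of_nonneg (not_lt.mp h)]
  have hls : (fun i => μ i * s i) = fun i => |μ i| := by
    funext i
    by_cases h : μ i < 0
    · simp [hs, h, abs_of_neg h]
    · simp [hs, h, abs_of_nonneg (not_lt.mp h)]
  have hss : (fun i => s i * s i) = fun _ => (1 : ℝ) := by
    funext i; by_cases h : μ i < 0 <;> simp [hs, h]
  set W := V * diagonal s * Vᵀ with hW
  set absC := V * diagonal (fun i => |μ i|) * Vᵀ with habsC
  have hWt : Wᵀ = W := conj_transpose_self V s
  have hWW : Wᵀ * W = 1 := by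
    rw [hWt, hW, conj_mul hV1, hss, Matrix.diagonal_one, Matrix.mul_one, hV2]
  have hWC : W * C = absC := by rw [hW, habsC]; conv_lhs => rw [hspec, conj_mul hV1, hsl]
  have hCW : C * W = absC := by rw [hW, habsC]; conv_lhs => rw [hspec, conj_mul hV1, hls]
  have hXX : (X * X).IsHermitian := by
    show (X * X)ᴴ = X * X
    rw [Matrix.conjTranspose_mul, hX.1]
  have hYY : (Y * Y).IsHermitian := by
    show (Y * Y)ᴴ = Y * Y
    rw [Matrix.conjTranspose_mul, hY.1]
  have herm2 : (X * X - Y * Y).IsHermitian := hXX.sub hYY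
  have htwo : C * Dm + Dm * C = (X * X - Y * Y) + (X * X - Y * Y) := by
    rw [hC, hDm]; noncomm_ring
  have htr1 : ((X * X - Y * Y) * W).trace = (Dm * absC).trace := by
    have h3 : (C * Dm * W).trace = (Dm * absC).trace := by
      rw [Matrix.trace_mul_cycle, hWC, Matrix.trace_mul_comm]
    have h4 : (Dm * C * W).trace = (Dm * absC).trace := by
      rw [Matrix.mul_assoc, hCW]
    have h5 := congrArg (fun M => (M * W).trace) htwo
    simp only [Matrix.add_mul, Matrix.trace_add] at h5
    rw [h3, h4] at h5
    linarith
  set G := Vᵀ * Dm * V with hG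
  have hVCV : Vᵀ * C * V = diagonal μ := by
    conv_lhs => rw [hspec]
    rw [show Vᵀ * (V * diagonal μ * Vᵀ) * V = (Vᵀ * V) * diagonal μ * (Vᵀ * V) by
      simp only [Matrix.mul_assoc], hV1, Matrix.one_mul, Matrix.mul_one]
  have hGbound : ∀ i, |μ i| ≤ G i i := by
    intro i
    have hplus : (Vᵀ * (Dm + C) * V).PosSemidef := by
      have h6 : Dm + C = X + X := by rw [hDm, hC]; abel
      have h7 := (hX.add hX).conjTranspose_mul_mul_same V
      rw [← h6] at h7
      simpa [Matrix.conjTranspose_eq_transpose_of_trivial] using h7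
    have hminus : (Vᵀ * (Dm - C) * V).PosSemidef := by
      have h6 : Dm - C = Y + Y := by rw [hDm, hC]; abel
      have h7 := (hY.add hY).conjTranspose_mul_mul_same V
      rw [← h6] at h7
      simpa [Matrix.conjTranspose_eq_transpose_of_trivial] using h7
    have e1 : Vᵀ * (Dm + C) * V = G + diagonal μ := by
      rw [Matrix.mul_add, Matrix.add_mul, hVCV]
    have e2 : Vᵀ * (Dm - C) * V = G - diagonal μ := by
      rw [Matrix.mul_sub, Matrix.sub_mul, hVCV]
    have p1 := psd_diag_nonneg (e1 ▸ hplus) i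
    have p2 := psd_diag_nonneg (e2 ▸ hminus) i
    simp only [Matrix.add_apply, Matrix.sub_apply, Matrix.diagonal_apply_eq] at p1 p2
    exact abs_le.mpr ⟨by linarith, by linarith⟩
  have htrDm : (Dm * absC).trace = ∑ i, |μ i| * G i i := by
    have h8 : Dm * absC = Dm * V * diagonal (fun i => |μ i|) * Vᵀ := by
      rw [habsC]; simp only [Matrix.mul_assoc]
    rw [h8, Matrix.trace_mul_comm,
      show Vᵀ * (Dm * V * diagonal fun i => |μ i|) = G * diagonal (fun i => |μ i|) by
        rw [hG]; simp only [Matrix.mul_assoc]]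
    simp [Matrix.trace, Matrix.diag, Matrix.mul_apply, Matrix.diagonal_apply, mul_comm]
  have hfrob : frobSq C = ∑ i, μ i ^ 2 := by
    rw [frobSq_eq_trace_transpose_mul, transpose_eq_of_isHermitian hCher]
    conv_lhs => rw [hspec, conj_mul hV1, conj_trace hV1]
    congr 1; funext i; rw [sq]
  have hchain : frobSq C ≤ (Dm * absC).trace := by
    rw [hfrob, htrDm]
    apply Finset.sum_le_sum
    intro i _
    calc μ i ^ 2 = |μ i| * |μ i| := by rw [sq]; exact (abs_mul_abs_self _).symm
      _ ≤ |μ i| * G i i := mul_le_mul_of_nonneg_left (hGbound i) (abs_nonneg _)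
  calc frobSq C ≤ (Dm * absC).trace := hchain
    _ = ((X * X - Y * Y) * W).trace := htr1.symm
    _ ≤ nuclearNorm (X * X - Y * Y) := trace_mul_orth_le herm2 hWW

lemma euclidean_inner_eq (x y : EuclideanSpace ℝ m) : (inner ℝ x y : ℝ) = ∑ k, x k * y k := by
  rw [PiLp.inner_apply]
  congr 1
  funext k
  simp [mul_comm]

lemma exists_polar (C : Matrix m m ℝ) :
    ∃ R ∈ Matrix.orthogonalGroup m ℝ, (Rᵀ * C).trace = nuclearNorm C := by
  obtain ⟨V, hV1, hV2, hBB, hd0⟩ := gram_diag C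
  set d := (Matrix.isHermitian_conjTranspose_mul_self C).eigenvalues with hd
  set B := C * V with hB
  set u : m → EuclideanSpace ℝ m := fun i => (Real.sqrt (d i))⁻¹ • WithLp.toLp 2 (fun k => B k i) with hu
  set sset : Set m := {i | d i ≠ 0} with hsset
  have hBdot : ∀ i j, ∑ k, B k i * B k j = if i = j then d i else 0 := col_dot_of_gram hBB
  have horth : Orthonormal ℝ (sset.restrict u) := by
    rw [orthonormal_iff_ite]
    intro i j
    have hdi : d i.1 ≠ 0 := i.2
    have hdj : d j.1 ≠ 0 := j.2
    have hpi : 0 < d i.1 := lt_of_le_of_ne (hd0 i.1) (Ne.symm hdi)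
    have hpj : 0 < d j.1 := lt_of_le_of_ne (hd0 j.1) (Ne.symm hdj)
    change inner ℝ (u i.1) (u j.1) = _
    rw [euclidean_inner_eq]
    have hcalc : ∀ k, u i.1 k * u j.1 k
        = (Real.sqrt (d i.1))⁻¹ * (Real.sqrt (d j.1))⁻¹ * (B k i.1 * B k j.1) := by
      intro k; simp [hu, PiLp.smul_apply, smul_eq_mul]; ring
    rw [Finset.sum_congr rfl fun k _ => hcalc k, ← Finset.mul_sum, hBdot]
    by_cases h : i = j
    · subst h
      simp only [if_pos rfl]
      have hss : Real.sqrt (d i.1) * Real.sqrt (d i.1) = d i.1 := Real.mul_self_sqrt (hd0 i.1)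
      rw [← mul_inv, hss]
      simp [inv_mul_cancel₀ hdi]
    · have h' : i.1 ≠ j.1 := fun hc => h (Subtype.ext hc)
      simp [h, h']
  obtain ⟨b, hb⟩ := horth.exists_orthonormalBasis_extension_of_card_eq
    (finrank_euclideanSpace (𝕜 := ℝ) (ι := m))
  set U : Matrix m m ℝ := Matrix.of fun k i => b i k with hU
  have hUU : Uᵀ * U = 1 := by
    ext i j
    have h1 : (Uᵀ * U) i j = ∑ k, b i k * b j k := by
      simp [hU, Matrix.mul_apply, Matrix.transpose_apply]
    rw [h1, ← euclidean_inner_eq (b i) (b j), orthonormal_iff_ite.mp b.orthonormal i j]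
    simp [Matrix.one_apply]
  refine ⟨U * Vᵀ, ?_, ?_⟩
  · rw [Matrix.mem_orthogonalGroup_iff]
    rw [Matrix.transpose_mul, Matrix.transpose_transpose]
    rw [show U * Vᵀ * (V * Uᵀ) = U * (Vᵀ * V) * Uᵀ by simp only [Matrix.mul_assoc], hV1,
      Matrix.mul_one]
    exact mul_eq_one_comm.mp hUU
  · rw [Matrix.transpose_mul, Matrix.transpose_transpose, Matrix.trace_mul_cycle,
      show C * V * Uᵀ = B * Uᵀ from rfl, trace_mul_transpose]
    rw [Finset.sum_comm]
    have hcol : ∀ j, ∑ i, B i j * U i j = Real.sqrt (d j) := by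
      intro j
      by_cases h : d j = 0
      · have : ∀ i, B i j = 0 := col_zero_of_gram hBB h
        simp [this, h]
      · have hj : j ∈ sset := h
        have hpj : 0 < d j := lt_of_le_of_ne (hd0 j) (Ne.symm h)
        have hbu : ∀ i, U i j = u j i := by
          intro i; rw [hU]; simp only [Matrix.of_apply]; rw [hb j hj]
        have : ∀ i, B i j * U i j = (Real.sqrt (d j))⁻¹ * (B i j * B i j) := by
          intro i; rw [hbu i]; simp [hu, PiLp.smul_apply, smul_eq_mul]; ring
        rw [Finset.sum_congr rfl fun i _ => this i, ← Finset.mul_sum, hBdot, if_pos rfl,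
          inv_mul_eq_div, Real.div_sqrt]
    rw [Finset.sum_congr rfl fun j _ => hcol j]
    rfl

lemma double_sum_CS (f g : m → n → ℝ) :
    (∑ i, ∑ j, f i j * g i j) ^ 2 ≤ (∑ i, ∑ j, f i j ^ 2) * (∑ i, ∑ j, g i j ^ 2) := by
  have h := Finset.sum_mul_sq_le_sq_mul_sq Finset.univ
    (fun p : m × n => f p.1 p.2) (fun p : m × n => g p.1 p.2)
  calc (∑ i, ∑ j, f i j * g i j) ^ 2
      = (∑ p : m × n, f p.1 p.2 * g p.1 p.2) ^ 2 := by rw [← Fintype.sum_prod_type']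
    _ ≤ (∑ p : m × n, f p.1 p.2 ^ 2) * ∑ p : m × n, g p.1 p.2 ^ 2 := h
    _ = (∑ i, ∑ j, f i j ^ 2) * ∑ i, ∑ j, g i j ^ 2 := by
        rw [← Fintype.sum_prod_type', ← Fintype.sum_prod_type']

lemma orth_transpose_right {R : Matrix n n ℝ} (hR : R ∈ Matrix.orthogonalGroup n ℝ) :
    R * Rᵀ = 1 := by
  rw [Matrix.mem_orthogonalGroup_iff] at hR
  exact hR

lemma exists_good_rotation (A B : Matrix m n ℝ) :
    ∃ R ∈ Matrix.orthogonalGroup n ℝ,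
      frobSq (A - B * R) ≤ nuclearNorm (A * Aᵀ - B * Bᵀ) := by
  obtain ⟨R, hR, hTr⟩ := exists_polar (Bᵀ * A)
  have hRmem : R * Rᵀ = 1 := orth_transpose_right hR
  have hKX : (A * Aᵀ).PosSemidef := posSemidef_self_mul_transpose A
  have hKY : (B * Bᵀ).PosSemidef := posSemidef_self_mul_transpose B
  set sX := hKX.sqrt with hsX
  set sY := hKY.sqrt with hsY
  have hsX2 : sX * sX = A * Aᵀ := hKX.sqrt_mul_self
  have hsY2 : sY * sY = B * Bᵀ := hKY.sqrt_mul_self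
  have hsXt : sXᵀ = sX := transpose_eq_of_isHermitian hKX.posSemidef_sqrt.1
  have hsYt : sYᵀ = sY := transpose_eq_of_isHermitian hKY.posSemidef_sqrt.1
  have hPS : frobSq (sX - sY) ≤ nuclearNorm (A * Aᵀ - B * Bᵀ) := by
    have := powers_stormer hKX.posSemidef_sqrt hKY.posSemidef_sqrt
    rwa [hsX2, hsY2] at this
  have hfrobBR : frobSq (B * R) = frobSq B := by
    rw [frobSq_eq_trace_mul_transpose, frobSq_eq_trace_mul_transpose,
      show B * R * (B * R)ᵀ = B * (R * Rᵀ) * Bᵀ by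
        simp only [Matrix.transpose_mul, Matrix.mul_assoc], hRmem, Matrix.mul_one]
  have hcross : ∑ i, ∑ j, A i j * (B * R) i j = (Rᵀ * (Bᵀ * A)).trace := by
    rw [← trace_mul_transpose A (B * R), Matrix.transpose_mul, Matrix.trace_mul_comm,
      Matrix.mul_assoc]
  have hexp : frobSq (A - B * R) = frobSq A + frobSq B - 2 * nuclearNorm (Bᵀ * A) := by
    rw [frobSq_sub, hfrobBR, hcross, hTr]
  have hNuc : (sX * sY).trace ≤ nuclearNorm (Bᵀ * A) := by
    have e1 : (Bᵀ * A)ᵀ * (Bᵀ * A) = (sY * A)ᵀ * (sY * A) := by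
      rw [Matrix.transpose_mul, Matrix.transpose_mul, Matrix.transpose_transpose, hsYt]
      rw [show Aᵀ * B * (Bᵀ * A) = Aᵀ * (B * Bᵀ) * A by simp only [Matrix.mul_assoc],
        show Aᵀ * sY * (sY * A) = Aᵀ * (sY * sY) * A by simp only [Matrix.mul_assoc], hsY2]
    have e2 : ((sY * A)ᵀ)ᵀ * (sY * A)ᵀ = ((sY * sX)ᵀ)ᵀ * (sY * sX)ᵀ := by
      rw [Matrix.transpose_transpose, Matrix.transpose_transpose, Matrix.transpose_mul,
        Matrix.transpose_mul, hsYt, hsXt]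
      rw [show sY * A * (Aᵀ * sY) = sY * (A * Aᵀ) * sY by simp only [Matrix.mul_assoc],
        show sY * sX * (sX * sY) = sY * (sX * sX) * sY by simp only [Matrix.mul_assoc], hsX2]
    calc (sX * sY).trace = (sY * sX).trace := Matrix.trace_mul_comm sX sY
      _ ≤ nuclearNorm (sY * sX) := trace_le_nuclearNorm _
      _ = nuclearNorm ((sY * sX)ᵀ) := (nuclearNorm_transpose _).symm
      _ = nuclearNorm ((sY * A)ᵀ) := (nuclearNorm_eq_of_gram_eq e2).symm
      _ = nuclearNorm (sY * A) := nuclearNorm_transpose _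
      _ = nuclearNorm (Bᵀ * A) := (nuclearNorm_eq_of_gram_eq e1).symm
  have hfrobsX : frobSq sX = frobSq A := by
    rw [frobSq_eq_trace_mul_transpose, frobSq_eq_trace_mul_transpose, hsXt, hsX2]
  have hfrobsY : frobSq sY = frobSq B := by
    rw [frobSq_eq_trace_mul_transpose, frobSq_eq_trace_mul_transpose, hsYt, hsY2]
  have hcross2 : ∑ i, ∑ j, sX i j * sY i j = (sX * sY).trace := by
    rw [← trace_mul_transpose sX sY, hsYt]
  have hexp2 : frobSq (sX - sY) = frobSq A + frobSq B - 2 * (sX * sY).trace := by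
    rw [frobSq_sub, hfrobsX, hfrobsY, hcross2]
  exact ⟨R, hR, by linarith⟩

lemma rotation_lower (A B : Matrix m n ℝ) {R : Matrix n n ℝ}
    (hR : R ∈ Matrix.orthogonalGroup n ℝ) :
    nuclearNorm (A * Aᵀ - B * Bᵀ) ^ 2 ≤
      frobSq (A - B * R) *
        (2 * ((A * Aᵀ).trace + (B * Bᵀ).trace) - frobSq (A - B * R)) := by
  have hRmem : R * Rᵀ = 1 := orth_transpose_right hR
  set Z := B * R with hZ
  have hZZ : Z * Zᵀ = B * Bᵀ := by
    rw [hZ, show B * R * (B * R)ᵀ = B * (R * Rᵀ) * Bᵀ by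
      simp only [Matrix.transpose_mul, Matrix.mul_assoc], hRmem, Matrix.mul_one]
  have hΔher : (A * Aᵀ - B * Bᵀ).IsHermitian :=
    (posSemidef_self_mul_transpose A).1.sub (posSemidef_self_mul_transpose B).1
  obtain ⟨W, hWt, hWW, hTrW⟩ := (sign_package hΔher).2
  set S := A + Z with hS
  set T := A - Z with hT
  have hid : S * Tᵀ + T * Sᵀ = (A * Aᵀ - B * Bᵀ) + (A * Aᵀ - B * Bᵀ) := by
    rw [← hZZ, hS, hT]
    simp only [Matrix.transpose_add, Matrix.transpose_sub, Matrix.add_mul, Matrix.mul_add,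
      Matrix.sub_mul, Matrix.mul_sub]
    abel
  have htrW : (W * (A * Aᵀ - B * Bᵀ)).trace = ((W * S) * Tᵀ).trace := by
    have h5 := congrArg (fun M => (W * M).trace) hid
    simp only [Matrix.mul_add, Matrix.trace_add] at h5
    have h6 : (W * (T * Sᵀ)).trace = (W * (S * Tᵀ)).trace := by
      rw [← Matrix.trace_transpose (W * (T * Sᵀ))]
      rw [show (W * (T * Sᵀ))ᵀ = (S * Tᵀ) * Wᵀ by
        simp only [Matrix.transpose_mul, Matrix.transpose_transpose, Matrix.mul_assoc]]
      rw [hWt, Matrix.trace_mul_comm]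
    have h7 : (W * (S * Tᵀ)).trace = ((W * S) * Tᵀ).trace := by rw [Matrix.mul_assoc]
    rw [h6, h7] at h5
    have h8 : (W * (A * Aᵀ - B * Bᵀ)).trace + (W * (A * Aᵀ - B * Bᵀ)).trace
        = ((W * S) * Tᵀ).trace + ((W * S) * Tᵀ).trace := h5.symm
    linarith
  have hCS : (((W * S) * Tᵀ).trace) ^ 2 ≤ frobSq (W * S) * frobSq T := by
    rw [trace_mul_transpose]
    exact double_sum_CS _ _
  have hfrobWS : frobSq (W * S) = frobSq S := by
    rw [frobSq_eq_trace_transpose_mul, frobSq_eq_trace_transpose_mul,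
      show (W * S)ᵀ * (W * S) = Sᵀ * (Wᵀ * W) * S by
        simp only [Matrix.transpose_mul, Matrix.mul_assoc], hWW, Matrix.mul_one]
  have hsum : frobSq S + frobSq T = 2 * (frobSq A + frobSq Z) := frobSq_add_add_sub A Z
  have hfa : frobSq A = (A * Aᵀ).trace := frobSq_eq_trace_mul_transpose A
  have hfz : frobSq Z = (B * Bᵀ).trace := by
    rw [frobSq_eq_trace_mul_transpose, hZZ]
  have hTnn : 0 ≤ frobSq T := frobSq_nonneg T
  have hfinal : nuclearNorm (A * Aᵀ - B * Bᵀ) ^ 2 ≤ frobSq S * frobSq T := by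
    rw [← hTrW, htrW, ← hfrobWS]
    exact hCS
  have hSval : frobSq S = 2 * ((A * Aᵀ).trace + (B * Bᵀ).trace) - frobSq T := by
    rw [← hfa, ← hfz]; linarith
  rw [hSval] at hfinal
  rw [show frobSq (A - B * R) = frobSq T from rfl]
  linarith [hfinal]

lemma frobSq_eq_sum_sq_eigenvalues {A : Matrix m m ℝ} (hA : A.IsHermitian) :
    frobSq A = ∑ i, hA.eigenvalues i ^ 2 := by
  obtain ⟨V, hV1, hV2, hspec⟩ := exists_orth_diag hA
  rw [frobSq_eq_trace_transpose_mul, transpose_eq_of_isHermitian hA]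
  conv_lhs => rw [hspec, conj_mul hV1, conj_trace hV1]
  congr 1; funext i; rw [sq]

lemma frobSq_le_sq_nuclearNorm {A : Matrix m m ℝ} (hA : A.IsHermitian) :
    frobSq A ≤ nuclearNorm A ^ 2 := by
  rw [frobSq_eq_sum_sq_eigenvalues hA, (sign_package hA).1]
  calc ∑ i, hA.eigenvalues i ^ 2 = ∑ i, |hA.eigenvalues i| ^ 2 := by
        congr 1; funext i; rw [sq_abs]
    _ ≤ (∑ i, |hA.eigenvalues i|) ^ 2 :=
        Finset.sum_sq_le_sq_sum_of_nonneg fun i _ => abs_nonneg _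

end ProcrustesAux

end

open ProcrustesAux

/-- The Procrustes shape distance `P(X̃, Ỹ) = min_{R ∈ O(N)} ‖X̃ − Ỹ R‖_F` between two
representations of matching dimensions. -/
noncomputable def procrustesDist {M N : ℕ} (Xt Yt : Matrix (Fin M) (Fin N) ℝ) : ℝ :=
  sInf {d : ℝ | ∃ R ∈ Matrix.orthogonalGroup (Fin N) ℝ,
    d = Real.sqrt (frobSq (Xt - Yt * R))}

/-- For `X̃, Ỹ ∈ ℝ^{M×N}` with kernel matrices `K_X = X̃ X̃ᵀ ≠ Ỹ Ỹᵀ = K_Y`,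
`α = Tr K_X`, `β = Tr K_Y`, `D = ‖K_X − K_Y‖_F²` and participation ratio
`R_Δ = ‖K_X − K_Y‖_*²/‖K_X − K_Y‖_F²`, the Procrustes distance `P = P(X̃, Ỹ)` satisfies
`(α + β) − √((α + β)² − R_Δ D) ≤ P² ≤ √(R_Δ D)`; equivalently,
`(1/R_Δ) P⁴ ≤ D ≤ (2(α + β) P² − P⁴)/R_Δ`. -/
theorem procrustes_decoding_distance_bounds
    {M N : ℕ} (Xt Yt : Matrix (Fin M) (Fin N) ℝ)
    (KX KY : Matrix (Fin M) (Fin M) ℝ)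
    (hKX : KX = Xt * Xtᵀ) (hKY : KY = Yt * Ytᵀ) (hne : KX ≠ KY)
    (α β D RΔ P : ℝ)
    (hα : α = KX.trace) (hβ : β = KY.trace)
    (hD : D = frobSq (KX - KY))
    (hRΔ : RΔ = nuclearNorm (KX - KY) ^ 2 / frobSq (KX - KY))
    (hP : P = procrustesDist Xt Yt) :
    ((α + β) - Real.sqrt ((α + β) ^ 2 - RΔ * D) ≤ P ^ 2 ∧
      P ^ 2 ≤ Real.sqrt (RΔ * D)) ∧
    ((1 / RΔ) * P ^ 4 ≤ D ∧ D ≤ (2 * (α + β) * P ^ 2 - P ^ 4) / RΔ) := by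

  subst hKX hKY hα hβ hD hRΔ hP
  set Δ : Matrix (Fin M) (Fin M) ℝ := Xt * Xtᵀ - Yt * Ytᵀ with hΔdef
  have hΔher : Δ.IsHermitian :=
    (posSemidef_self_mul_transpose Xt).1.sub (posSemidef_self_mul_transpose Yt).1
  set nst := nuclearNorm Δ with hnst
  set Dv := frobSq Δ with hDv
  set ab := (Xt * Xtᵀ).trace + (Yt * Ytᵀ).trace with hab
  have hΔne : Δ ≠ 0 := sub_ne_zero.mpr hne
  have hDpos : 0 < Dv := frobSq_pos hΔne
  have hDle : Dv ≤ nst ^ 2 := frobSq_le_sq_nuclearNorm hΔher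
  have hnstpos : 0 < nst ^ 2 := lt_of_lt_of_le hDpos hDle
  set Sset : Set ℝ := {d : ℝ | ∃ R ∈ Matrix.orthogonalGroup (Fin N) ℝ,
    d = Real.sqrt (frobSq (Xt - Yt * R))} with hSset
  have hSne : Sset.Nonempty :=
    ⟨Real.sqrt (frobSq (Xt - Yt * 1)), 1, one_mem _, rfl⟩
  have hSlb : ∀ d ∈ Sset, (0 : ℝ) ≤ d := by
    rintro d ⟨R, hR, rfl⟩; exact Real.sqrt_nonneg _
  have hBdd : BddBelow Sset := ⟨0, fun d hd => hSlb d hd⟩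
  set Pv := procrustesDist Xt Yt with hPv
  have hPS : Pv = sInf Sset := rfl
  have hP0 : 0 ≤ Pv := by rw [hPS]; exact le_csInf hSne hSlb
  have hPle : ∀ d ∈ Sset, Pv ≤ d := fun d hd => by rw [hPS]; exact csInf_le hBdd hd
  -- upper bound : P² ≤ nst
  have F2 : Pv ^ 2 ≤ nst := by
    obtain ⟨R, hR, hle⟩ := exists_good_rotation Xt Yt
    have hd : Pv ≤ Real.sqrt (frobSq (Xt - Yt * R)) := hPle _ ⟨R, hR, rfl⟩
    calc Pv ^ 2 ≤ Real.sqrt (frobSq (Xt - Yt * R)) ^ 2 := by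
          exact pow_le_pow_left₀ hP0 hd 2
      _ = frobSq (Xt - Yt * R) := Real.sq_sqrt (frobSq_nonneg _)
      _ ≤ nst := hle
  -- lower bound : nst² ≤ P²(2(α+β) − P²)
  have helem : ∀ d ∈ Sset, nst ^ 2 ≤ d ^ 2 * (2 * ab - d ^ 2) := by
    rintro d ⟨R, hR, rfl⟩
    have h := rotation_lower Xt Yt hR
    rwa [← hab, ← hnst, Real.sq_sqrt (frobSq_nonneg _)] at *
    
  have F3 : nst ^ 2 ≤ Pv ^ 2 * (2 * ab - Pv ^ 2) := by
    apply le_of_forall_pos_le_add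
    intro ε hε
    set Cc : ℝ := 2 * |ab| * (2 * Pv + 1) + 1 with hCc
    have hCcpos : 0 < Cc := by positivity
    set δ : ℝ := min 1 (ε / Cc) with hδ
    have hδpos : 0 < δ := lt_min one_pos (div_pos hε hCcpos)
    have hδ1 : δ ≤ 1 := min_le_left _ _
    have hδC : δ ≤ ε / Cc := min_le_right _ _
    obtain ⟨d, hdS, hdlt⟩ := Real.lt_sInf_add_pos hSne hδpos
    rw [← hPS] at hdlt
    have h1 : Pv ≤ d := hPle d hdS
    have helemd := helem d hdS
    have hq1 : 0 ≤ d ^ 2 - Pv ^ 2 := sub_nonneg.mpr (pow_le_pow_left₀ hP0 h1 2)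
    have hd2 : d ^ 2 - Pv ^ 2 ≤ δ * (2 * Pv + 1) := by nlinarith
    have hd4 : Pv ^ 4 ≤ d ^ 4 := pow_le_pow_left₀ hP0 h1 4
    have e1 : 2 * ab * (d ^ 2 - Pv ^ 2) ≤ 2 * |ab| * (d ^ 2 - Pv ^ 2) :=
      mul_le_mul_of_nonneg_right (by have := le_abs_self ab; linarith) hq1
    have e2 : 2 * |ab| * (d ^ 2 - Pv ^ 2) ≤ 2 * |ab| * (δ * (2 * Pv + 1)) :=
      mul_le_mul_of_nonneg_left hd2 (by positivity)
    have e3 : δ * Cc ≤ ε := (le_div_iff₀ hCcpos).mp hδC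
    have e4 : 2 * |ab| * (δ * (2 * Pv + 1)) = δ * Cc - δ := by rw [hCc]; ring
    nlinarith [helemd]
  -- assemble
  have hRDD : nst ^ 2 / Dv * Dv = nst ^ 2 := div_mul_cancel₀ _ (ne_of_gt hDpos)
  have hnst0 : 0 ≤ nst := le_trans (sq_nonneg Pv) F2
  have hRΔpos : 0 < nst ^ 2 / Dv := div_pos hnstpos hDpos
  have G1 : Pv ^ 2 ≤ Real.sqrt (nst ^ 2 / Dv * Dv) := by
    rw [hRDD, Real.sqrt_sq hnst0]; exact F2
  have G2 : ab - Real.sqrt (ab ^ 2 - nst ^ 2 / Dv * Dv) ≤ Pv ^ 2 := by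
    have h : (ab - Pv ^ 2) ^ 2 ≤ ab ^ 2 - nst ^ 2 := by nlinarith [F3]
    have h2 : ab - Pv ^ 2 ≤ Real.sqrt (ab ^ 2 - nst ^ 2 / Dv * Dv) := by
      rw [hRDD]
      calc ab - Pv ^ 2 ≤ |ab - Pv ^ 2| := le_abs_self _
        _ = Real.sqrt ((ab - Pv ^ 2) ^ 2) := (Real.sqrt_sq_eq_abs _).symm
        _ ≤ Real.sqrt (ab ^ 2 - nst ^ 2) := Real.sqrt_le_sqrt h
    linarith
  have G3 : 1 / (nst ^ 2 / Dv) * Pv ^ 4 ≤ Dv := by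
    have hP4 : Pv ^ 4 ≤ nst ^ 2 := by
      calc Pv ^ 4 = (Pv ^ 2) ^ 2 := by ring
        _ ≤ nst ^ 2 := pow_le_pow_left₀ (sq_nonneg Pv) F2 2
    rw [one_div, ← div_eq_inv_mul, div_le_iff₀ hRΔpos, mul_comm Dv, hRDD]
    exact hP4
  have G4 : Dv ≤ (2 * ab * Pv ^ 2 - Pv ^ 4) / (nst ^ 2 / Dv) := by
    rw [le_div_iff₀ hRΔpos, mul_comm Dv, hRDD]
    nlinarith [F3]
  exact ⟨⟨G2, G1⟩, G3, G4⟩
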